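/- Let d ≥ 1, let c_q ≥ 0 and c_l ≥ 0 with not both zero, and for positive definite real d×d matrices X, Y define f(X, Y) = c_q·(log det X)² + c_l·(log det X)·(log det Y) − c_q·(log det Y)². Let X*, Y* be positive definite real d×d matrices. Then (X*, Y*) is a global saddle point of f — meaning f(X*, Y) ≤ f(X*, Y*) ≤ f(X, Y*) for all positive definite d×d matrices X and Y — if and only if det X* = 1 and det Y* = 1. -/
import Mathlib

lemma key_saddle (c_q c_l a b : ℝ) (hq : 0 ≤ c_q) (hl : 0 ≤ c_l)
    (hne : ¬(c_q = 0 ∧ c_l = 0))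
    (h1 : ∀ y : ℝ, c_l * a * y - c_q * y ^ 2 ≤ c_l * a * b - c_q * b ^ 2)
    (h2 : ∀ x : ℝ, c_q * a ^ 2 + c_l * a * b ≤ c_q * x ^ 2 + c_l * x * b) :
    a = 0 ∧ b = 0 := by
  rcases eq_or_lt_of_le hq with hq0 | hq0
  · subst hq0
    have hl0 : 0 < c_l := lt_of_le_of_ne hl fun h => hne ⟨rfl, h.symm⟩
    have ha : a = 0 := by
      have h3 : c_l * (a * a) ≤ 0 := by have := h1 (b + a); nlinarith
      have h4 : a * a = 0 := le_antisymm (by nlinarith) (mul_self_nonneg a)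
      exact mul_self_eq_zero.mp h4
    have hb : b = 0 := by
      have h3 : c_l * (b * b) ≤ 0 := by have := h2 (a - b); nlinarith
      have h4 : b * b = 0 := le_antisymm (by nlinarith) (mul_self_nonneg b)
      exact mul_self_eq_zero.mp h4
    exact ⟨ha, hb⟩
  · have hcq : c_q ≠ 0 := hq0.ne'
    have e1 := h1 (c_l * a / (2 * c_q))
    have e2 := h2 (-(c_l * b) / (2 * c_q))
    have k1 : c_l * a * (c_l * a / (2 * c_q)) - c_q * (c_l * a / (2 * c_q)) ^ 2
        = (c_l * a) ^ 2 / (4 * c_q) := by field_simp; ring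
    have k2 : c_q * (-(c_l * b) / (2 * c_q)) ^ 2 + c_l * (-(c_l * b) / (2 * c_q)) * b
        = -((c_l * b) ^ 2 / (4 * c_q)) := by field_simp; ring
    rw [k1, div_le_iff₀ (by positivity)] at e1
    rw [k2, le_neg, div_le_iff₀ (by positivity)] at e2
    have t1 : (2 * c_q * b - c_l * a) ^ 2 ≤ 0 := by nlinarith [e1]
    have t2 : (2 * c_q * a + c_l * b) ^ 2 ≤ 0 := by nlinarith [e2]
    have q1 : 2 * c_q * b - c_l * a = 0 :=
      (pow_eq_zero_iff two_ne_zero).mp (le_antisymm t1 (sq_nonneg _))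
    have q2 : 2 * c_q * a + c_l * b = 0 :=
      (pow_eq_zero_iff two_ne_zero).mp (le_antisymm t2 (sq_nonneg _))
    have q3 : (4 * c_q ^ 2 + c_l ^ 2) * b = 0 := by linear_combination (2 * c_q) * q1 + c_l * q2
    have h4 : (0:ℝ) < 4 * c_q ^ 2 + c_l ^ 2 := by positivity
    have hb : b = 0 := (mul_eq_zero.mp q3).resolve_left h4.ne'
    have ha : a = 0 := by
      rw [hb] at q2
      have h5 : (2 * c_q) * a = 0 := by linarith
      exact (mul_eq_zero.mp h5).resolve_left (by positivity)
    exact ⟨ha, hb⟩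

lemma exists_posdef_logdet (d : ℕ) (hd : 1 ≤ d) (y : ℝ) :
    ∃ M : Matrix (Fin d) (Fin d) ℝ, M.PosDef ∧ Real.log M.det = y := by
  refine ⟨Matrix.diagonal (fun _ => Real.exp (y / d)), ?_, ?_⟩
  · exact Matrix.posDef_diagonal_iff.mpr fun i => Real.exp_pos _
  · have hd0 : (d : ℝ) ≠ 0 := Nat.cast_ne_zero.mpr (by omega)
    rw [Matrix.det_diagonal]
    simp [Real.log_exp, Finset.prod_const, Real.log_pow, hd0, mul_div_cancel₀]

theorem saddle_point_iff_unit_determinant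
    (d : ℕ) (hd : 1 ≤ d) (c_q c_l : ℝ) (hq : 0 ≤ c_q) (hl : 0 ≤ c_l)
    (hne : ¬(c_q = 0 ∧ c_l = 0))
    (f : Matrix (Fin d) (Fin d) ℝ → Matrix (Fin d) (Fin d) ℝ → ℝ)
    (hf : ∀ X Y : Matrix (Fin d) (Fin d) ℝ,
      f X Y = c_q * Real.log X.det ^ 2 + c_l * Real.log X.det * Real.log Y.det
        - c_q * Real.log Y.det ^ 2)
    (Xstar Ystar : Matrix (Fin d) (Fin d) ℝ)
    (hXstar : Xstar.PosDef) (hYstar : Ystar.PosDef) :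
    ((∀ Y : Matrix (Fin d) (Fin d) ℝ, Y.PosDef → f Xstar Y ≤ f Xstar Ystar) ∧
     (∀ X : Matrix (Fin d) (Fin d) ℝ, X.PosDef → f Xstar Ystar ≤ f X Ystar))
      ↔ (Xstar.det = 1 ∧ Ystar.det = 1) := by
  set a := Real.log Xstar.det with haa
  set b := Real.log Ystar.det with hbb
  constructor
  · rintro ⟨h1, h2⟩
    have H1 : ∀ y : ℝ, c_l * a * y - c_q * y ^ 2 ≤ c_l * a * b - c_q * b ^ 2 := by
      intro y
      obtain ⟨M, hM, hMl⟩ := exists_posdef_logdet d hd y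
      have := h1 M hM
      rw [hf, hf, hMl] at this
      linarith
    have H2 : ∀ x : ℝ, c_q * a ^ 2 + c_l * a * b ≤ c_q * x ^ 2 + c_l * x * b := by
      intro x
      obtain ⟨M, hM, hMl⟩ := exists_posdef_logdet d hd x
      have := h2 M hM
      rw [hf, hf, hMl] at this
      linarith
    obtain ⟨ha, hb⟩ := key_saddle c_q c_l a b hq hl hne H1 H2
    constructor
    · rw [← Real.exp_log hXstar.det_pos, ← haa, ha, Real.exp_zero]
    · rw [← Real.exp_log hYstar.det_pos, ← hbb, hb, Real.exp_zero]
  · rintro ⟨hX1, hY1⟩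
    have ha : a = 0 := by rw [haa, hX1, Real.log_one]
    have hb : b = 0 := by rw [hbb, hY1, Real.log_one]
    constructor
    · intro Y hY
      rw [hf, hf, ← haa, ← hbb, ha, hb]
      nlinarith [sq_nonneg (Real.log Y.det)]
    · intro X hX
      rw [hf, hf, ← haa, ← hbb, ha, hb]
      nlinarith [sq_nonneg (Real.log X.det)]
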